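/- Suppose each f_i : ℝ^d → ℝ is β-smooth, f = (1/n)∑ f_i is λ-smooth and satisfies the α-PL condition, interpolation holds (f_i(x★)=0, ∇f_i(x★)=0 for all i), and 0 ≤ ρ ≤ 1/((β/α + 1/2)β). Then stochastic SAM with update x_{t+1} = x_t − η∇f_{i_t}(x_t + ρ∇f_{i_t}(x_t)), where i_t is uniform in {1,…,n} and step size η★ = (α − (β + α/2)βρ)/(2λβ(βρ+1)²), satisfies E[f(x_t)] ≤ (1 − ((α − (β + α/2)βρ)/2)·η★)^t · f(x_0) for all t ≥ 0, i.e., linear convergence. -/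

import Mathlib

set_option maxHeartbeats 1000000


open scoped BigOperators
open RealInnerProductSpace

/-- Stochastic SAM trajectory: `x_{t+1} = x_t − η∇f_{i_t}(x_t + ρ∇f_{i_t}(x_t))`,
as a function of the sampled index sequence `ω : Fin t → Fin n`. -/
noncomputable def samTraj {n d : ℕ} (η ρ : ℝ)
    (fi : Fin n → EuclideanSpace ℝ (Fin d) → ℝ)
    (x0 : EuclideanSpace ℝ (Fin d)) :
    (t : ℕ) → (Fin t → Fin n) → EuclideanSpace ℝ (Fin d)
  | 0, _ => x0
  | t + 1, ω =>
      let x := samTraj η ρ fi x0 t (fun j => ω j.castSucc)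
      let i := ω (Fin.last t)
      x - η • gradient (fi i) (x + ρ • gradient (fi i) x)


lemma descent_lemma {d : ℕ} {h : EuclideanSpace ℝ (Fin d) → ℝ} {L : ℝ} (hL : 0 ≤ L)
    (hd : Differentiable ℝ h)
    (hlip : ∀ x y, ‖gradient h x - gradient h y‖ ≤ L * ‖x - y‖)
    (x v : EuclideanSpace ℝ (Fin d)) :
    h (x + v) ≤ h x + ⟪gradient h x, v⟫ + L / 2 * ‖v‖ ^ 2 := by
  have hgradcont : Continuous (gradient h) := by
    have : LipschitzWith L.toNNReal (gradient h) :=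
      LipschitzWith.of_dist_le_mul (by
        intro a b
        simpa [dist_eq_norm, Real.coe_toNNReal L hL] using hlip a b)
    exact this.continuous
  set ψ : ℝ → ℝ := fun t => ⟪gradient h (x + t • v), v⟫ with hψ
  have hline : Continuous fun t : ℝ => x + t • v := by continuity
  have hψcont : Continuous ψ := ((hgradcont.comp hline).inner continuous_const)
  have hφ : ∀ t : ℝ, HasDerivAt (fun t : ℝ => h (x + t • v)) (ψ t) t := by
    intro t
    have h1 : HasFDerivAt h
        ((InnerProductSpace.toDual ℝ _) (gradient h (x + t • v))) (x + t • v) :=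
      hasGradientAt_iff_hasFDerivAt.mp (hd _).hasGradientAt
    have h2 : HasDerivAt (fun t : ℝ => x + t • v) v t := by
      simpa using ((hasDerivAt_id t).smul_const v).const_add x
    have h3 := h1.comp_hasDerivAt t h2
    have e : ψ t = ((InnerProductSpace.toDual ℝ _) (gradient h (x + t • v))) v := by
      simp [hψ, InnerProductSpace.toDual_apply_apply]
    rw [e]
    exact h3
  have hint : ∫ t in (0:ℝ)..1, ψ t = h (x + v) - h x := by
    have := intervalIntegral.integral_eq_sub_of_hasDerivAt
      (f := fun t : ℝ => h (x + t • v)) (f' := ψ)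
      (fun t _ => hφ t) (hψcont.intervalIntegrable 0 1)
    simpa using this
  have hIc : Continuous (fun t : ℝ => (⟪gradient h x, v⟫ : ℝ) + L * t * ‖v‖ ^ 2) := by
    apply continuous_const.add
    exact (continuous_const.mul continuous_id).mul continuous_const
  have hmono : ∫ t in (0:ℝ)..1, ψ t ≤
      ∫ t in (0:ℝ)..1, ((⟪gradient h x, v⟫ : ℝ) + L * t * ‖v‖ ^ 2) := by
    apply intervalIntegral.integral_mono_on (by norm_num)
      (hψcont.intervalIntegrable 0 1) (hIc.intervalIntegrable 0 1)
    intro t ht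
    have h1 : ψ t - ⟪gradient h x, v⟫ = ⟪gradient h (x + t • v) - gradient h x, v⟫ := by
      simp [hψ, inner_sub_left]
    have h2 : ⟪gradient h (x + t • v) - gradient h x, v⟫ ≤ L * t * ‖v‖ ^ 2 := by
      calc ⟪gradient h (x + t • v) - gradient h x, v⟫
          ≤ ‖gradient h (x + t • v) - gradient h x‖ * ‖v‖ := real_inner_le_norm _ _
        _ ≤ (L * ‖(x + t • v) - x‖) * ‖v‖ := by
            have := hlip (x + t • v) x
            nlinarith [norm_nonneg v]
        _ = L * t * ‖v‖ ^ 2 := by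
            rw [add_sub_cancel_left, norm_smul]
            simp [Real.norm_eq_abs, abs_of_nonneg ht.1]
            ring
    linarith
  have hcalc : ∫ t in (0:ℝ)..1, ((⟪gradient h x, v⟫ : ℝ) + L * t * ‖v‖ ^ 2)
      = ⟪gradient h x, v⟫ + L / 2 * ‖v‖ ^ 2 := by
    rw [intervalIntegral.integral_add intervalIntegrable_const
      (Continuous.intervalIntegrable (by continuity) 0 1)]
    have h3 : ∫ t in (0:ℝ)..1, L * t * ‖v‖ ^ 2 = L / 2 * ‖v‖ ^ 2 := by
      have h4 : (fun t : ℝ => L * t * ‖v‖ ^ 2) = fun t : ℝ => (L * ‖v‖ ^ 2) * t := by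
        funext t; ring
      rw [h4, intervalIntegral.integral_const_mul, integral_id]
      ring
    rw [h3]; simp
  linarith [hint ▸ (hcalc ▸ hmono)]

lemma self_bound {d : ℕ} {h : EuclideanSpace ℝ (Fin d) → ℝ} {L : ℝ} (hL : 0 < L)
    (hd : Differentiable ℝ h)
    (hlip : ∀ x y, ‖gradient h x - gradient h y‖ ≤ L * ‖x - y‖)
    (hnn : ∀ x, 0 ≤ h x) (x : EuclideanSpace ℝ (Fin d)) :
    ‖gradient h x‖ ^ 2 ≤ 2 * L * h x := by
  have key := descent_lemma hL.le hd hlip x (-(L⁻¹ • gradient h x))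
  have h1 : ⟪gradient h x, -(L⁻¹ • gradient h x)⟫ = -(L⁻¹ * ‖gradient h x‖ ^ 2) := by
    rw [inner_neg_right, real_inner_smul_right, real_inner_self_eq_norm_sq]
  have h2 : ‖-(L⁻¹ • gradient h x)‖ ^ 2 = L⁻¹ ^ 2 * ‖gradient h x‖ ^ 2 := by
    rw [norm_neg, norm_smul, mul_pow]
    simp [abs_of_nonneg (inv_nonneg.mpr hL.le)]
  have h0 := hnn (x + -(L⁻¹ • gradient h x))
  rw [h1, h2] at key
  have e : L⁻¹ * ‖gradient h x‖ ^ 2 - L / 2 * (L⁻¹ ^ 2 * ‖gradient h x‖ ^ 2)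
      = ‖gradient h x‖ ^ 2 / (2 * L) := by
    field_simp
    ring
  have h5 : ‖gradient h x‖ ^ 2 / (2 * L) ≤ h x := by linarith
  rw [div_le_iff₀ (by positivity)] at h5
  nlinarith

lemma grad_avg {n d : ℕ} (c : ℝ) (fi : Fin n → EuclideanSpace ℝ (Fin d) → ℝ)
    (hdiff : ∀ i, Differentiable ℝ (fi i)) (x : EuclideanSpace ℝ (Fin d)) :
    gradient (fun y => c * ∑ i, fi i y) x = c • ∑ i, gradient (fi i) x := by
  have hs : HasFDerivAt (fun y => ∑ i, fi i y)
      (∑ i, (InnerProductSpace.toDual ℝ (EuclideanSpace ℝ (Fin d))) (gradient (fi i) x)) x :=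
    HasFDerivAt.fun_sum fun i _ =>
      hasGradientAt_iff_hasFDerivAt.mp ((hdiff i x).hasGradientAt)
  have hF := hs.const_mul c
  have hg : HasGradientAt (fun y => c * ∑ i, fi i y) (c • ∑ i, gradient (fi i) x) x := by
    apply hasGradientAt_iff_hasFDerivAt.mpr
    convert hF using 1
    · rfl
    · simp
  exact hg.gradient

lemma sam_step {n d : ℕ} (hn : 0 < n) (β lam α ρ η : ℝ)
    (hβ : 0 < β) (hlam : 0 < lam) (hα : 0 < α) (hρ0 : 0 ≤ ρ)
    (hβρ2 : β * ρ ≤ 2) (hη0 : 0 ≤ η)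
    (hηeq : lam * β * (β * ρ + 1) ^ 2 * η ^ 2 = η * ((α - (β + α / 2) * β * ρ) / 2))
    (fi : Fin n → EuclideanSpace ℝ (Fin d) → ℝ)
    (f : EuclideanSpace ℝ (Fin d) → ℝ)
    (hfdef : ∀ x, f x = (n : ℝ)⁻¹ * ∑ i, fi i x)
    (hdiff : ∀ i, Differentiable ℝ (fi i)) (hfdiff : Differentiable ℝ f)
    (hnonneg : ∀ i x, 0 ≤ fi i x)
    (hβsmooth : ∀ i x y, ‖gradient (fi i) x - gradient (fi i) y‖ ≤ β * ‖x - y‖)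
    (hlamsmooth : ∀ x y, ‖gradient f x - gradient f y‖ ≤ lam * ‖x - y‖)
    (hPL' : ∀ x, α * f x ≤ ‖gradient f x‖ ^ 2)
    (x : EuclideanSpace ℝ (Fin d)) :
    (n : ℝ)⁻¹ * ∑ i, f (x - η • gradient (fi i) (x + ρ • gradient (fi i) x))
      ≤ (1 - (α - (β + α / 2) * β * ρ) / 2 * η) * f x := by
  have hbr : (0:ℝ) ≤ β * ρ := mul_nonneg hβ.le hρ0
  set g : Fin n → EuclideanSpace ℝ (Fin d) := fun i => gradient (fi i) x with hgdef
  set G : Fin n → EuclideanSpace ℝ (Fin d) :=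
    fun i => gradient (fi i) (x + ρ • g i) with hGdef
  set N : ℝ := ‖gradient f x‖ ^ 2 with hNdef
  -- gradient of f is the average of the gradients
  have hgradf : gradient f x = (n : ℝ)⁻¹ • ∑ i, g i := by
    have hfeq : f = fun y => (n : ℝ)⁻¹ * ∑ i, fi i y := funext hfdef
    rw [hfeq]
    exact grad_avg _ fi hdiff x
  have hsumg : ∑ i, g i = (n : ℝ) • gradient f x := by
    rw [hgradf, smul_smul, mul_inv_cancel₀ (by exact_mod_cast hn.ne'), one_smul]
  -- per-index facts
  have hGg : ∀ i, ‖G i - g i‖ ≤ β * ρ * ‖g i‖ := by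
    intro i
    have h := hβsmooth i (x + ρ • g i) x
    rw [add_sub_cancel_left, norm_smul, Real.norm_eq_abs, abs_of_nonneg hρ0] at h
    calc ‖G i - g i‖ ≤ β * (ρ * ‖g i‖) := h
      _ = β * ρ * ‖g i‖ := by ring
  have hGnorm : ∀ i, ‖G i‖ ^ 2 ≤ (β * ρ + 1) ^ 2 * ‖g i‖ ^ 2 := by
    intro i
    have h1 : ‖G i‖ ≤ (β * ρ + 1) * ‖g i‖ := by
      calc ‖G i‖ = ‖(G i - g i) + g i‖ := by rw [sub_add_cancel]
        _ ≤ ‖G i - g i‖ + ‖g i‖ := norm_add_le _ _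
        _ ≤ β * ρ * ‖g i‖ + ‖g i‖ := by linarith [hGg i]
        _ = (β * ρ + 1) * ‖g i‖ := by ring
    calc ‖G i‖ ^ 2 ≤ ((β * ρ + 1) * ‖g i‖) ^ 2 :=
          pow_le_pow_left₀ (norm_nonneg _) h1 2
      _ = (β * ρ + 1) ^ 2 * ‖g i‖ ^ 2 := by ring
  have hg2 : ∀ i, ‖g i‖ ^ 2 ≤ 2 * β * fi i x := fun i =>
    self_bound hβ (hdiff i) (hβsmooth i) (hnonneg i) x
  have hcross : ∀ i, ⟪gradient f x, g i⟫ - β * ρ / 2 * (N + ‖g i‖ ^ 2)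
      ≤ ⟪gradient f x, G i⟫ := by
    intro i
    have h1 : ⟪gradient f x, G i⟫
        = ⟪gradient f x, g i⟫ + ⟪gradient f x, G i - g i⟫ := by
      rw [← inner_add_right, add_sub_cancel]
    have h2 : |⟪gradient f x, G i - g i⟫| ≤ ‖gradient f x‖ * ‖G i - g i‖ :=
      abs_real_inner_le_norm _ _
    have h3 := mul_le_mul_of_nonneg_left (hGg i) (norm_nonneg (gradient f x))
    have h4 := abs_le.mp h2
    have h5 : ‖gradient f x‖ * (β * ρ * ‖g i‖) ≤ β * ρ / 2 * (N + ‖g i‖ ^ 2) := by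
      have := sq_nonneg (‖gradient f x‖ - ‖g i‖)
      nlinarith [hbr]
    linarith
  -- per-index descent inequality
  have hstep : ∀ i, f (x - η • G i) ≤ f x - η * ⟪gradient f x, g i⟫
      + η * (β * ρ / 2) * N
      + (η * (β * ρ / 2) + lam / 2 * η ^ 2 * (β * ρ + 1) ^ 2) * (2 * β * fi i x) := by
    intro i
    have hd := descent_lemma hlam.le hfdiff hlamsmooth x (-(η • G i))
    have e1 : x + -(η • G i) = x - η • G i := by rw [← sub_eq_add_neg]
    have e2 : ⟪gradient f x, -(η • G i)⟫ = -(η * ⟪gradient f x, G i⟫) := by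
      rw [inner_neg_right, real_inner_smul_right]
    have e3 : ‖-(η • G i)‖ ^ 2 = η ^ 2 * ‖G i‖ ^ 2 := by
      rw [norm_neg, norm_smul, mul_pow]
      simp [abs_of_nonneg hη0]
    rw [e1, e2, e3] at hd
    have c1 := mul_le_mul_of_nonneg_left (hcross i) hη0
    have c2 := mul_le_mul_of_nonneg_left (hGnorm i)
      (by positivity : (0:ℝ) ≤ lam / 2 * η ^ 2)
    have c3 := mul_le_mul_of_nonneg_left (hg2 i)
      (mul_nonneg hη0 (by linarith : (0:ℝ) ≤ β * ρ / 2))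
    have c4 := mul_le_mul_of_nonneg_left (hg2 i)
      (by positivity : (0:ℝ) ≤ lam / 2 * η ^ 2 * (β * ρ + 1) ^ 2)
    linarith [c1, c2, c3, c4, hd]
  -- sum over i
  have hsum : ∑ i, f (x - η • G i)
      ≤ ∑ i, (f x - η * ⟪gradient f x, g i⟫ + η * (β * ρ / 2) * N
        + (η * (β * ρ / 2) + lam / 2 * η ^ 2 * (β * ρ + 1) ^ 2) * (2 * β * fi i x)) :=
    Finset.sum_le_sum fun i _ => hstep i
  have hsum2 : ∑ i, (f x - η * ⟪gradient f x, g i⟫ + η * (β * ρ / 2) * N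
        + (η * (β * ρ / 2) + lam / 2 * η ^ 2 * (β * ρ + 1) ^ 2) * (2 * β * fi i x))
      = (n : ℝ) * f x - η * ((n : ℝ) * N) + (n : ℝ) * (η * (β * ρ / 2) * N)
        + (η * (β * ρ / 2) + lam / 2 * η ^ 2 * (β * ρ + 1) ^ 2)
          * (2 * β * ((n : ℝ) * f x)) := by
    rw [Finset.sum_add_distrib, Finset.sum_add_distrib, Finset.sum_sub_distrib]
    have s1 : ∑ i : Fin n, f x = (n : ℝ) * f x := by
      rw [Finset.sum_const]; simp [mul_comm]
    have s2 : ∑ i, η * ⟪gradient f x, g i⟫ = η * ((n : ℝ) * N) := by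
      rw [← Finset.mul_sum, ← inner_sum, hsumg, real_inner_smul_right,
        real_inner_self_eq_norm_sq]
    have s3 : ∑ i : Fin n, η * (β * ρ / 2) * N = (n : ℝ) * (η * (β * ρ / 2) * N) := by
      rw [Finset.sum_const]; simp [mul_comm]
    have s4 : ∑ i, (η * (β * ρ / 2) + lam / 2 * η ^ 2 * (β * ρ + 1) ^ 2) * (2 * β * fi i x)
        = (η * (β * ρ / 2) + lam / 2 * η ^ 2 * (β * ρ + 1) ^ 2)
          * (2 * β * ((n : ℝ) * f x)) := by
      rw [← Finset.mul_sum, ← Finset.mul_sum]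
      congr 2
      rw [hfdef x]
      field_simp
    rw [s1, s2, s3, s4]
  have hn' : (0:ℝ) < (n : ℝ) := by exact_mod_cast hn
  have hfinal : (n : ℝ)⁻¹ * ∑ i, f (x - η • G i)
      ≤ f x - η * (1 - β * ρ / 2) * N
        + (η * β ^ 2 * ρ + lam * β * (β * ρ + 1) ^ 2 * η ^ 2) * f x := by
    have h1 : (n : ℝ)⁻¹ * ∑ i, f (x - η • G i)
        ≤ (n : ℝ)⁻¹ * ((n : ℝ) * f x - η * ((n : ℝ) * N) + (n : ℝ) * (η * (β * ρ / 2) * N)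
          + (η * (β * ρ / 2) + lam / 2 * η ^ 2 * (β * ρ + 1) ^ 2)
            * (2 * β * ((n : ℝ) * f x))) := by
      apply mul_le_mul_of_nonneg_left _ (inv_nonneg.mpr hn'.le)
      rw [← hsum2]
      exact hsum
    calc (n : ℝ)⁻¹ * ∑ i, f (x - η • G i) ≤ _ := h1
      _ = f x - η * (1 - β * ρ / 2) * N
          + (η * β ^ 2 * ρ + lam * β * (β * ρ + 1) ^ 2 * η ^ 2) * f x := by
        field_simp
        ring
  have hPLx := hPL' x
  have hcoef : 0 ≤ η * (1 - β * ρ / 2) :=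
    mul_nonneg hη0 (by linarith)
  have h2 : f x - η * (1 - β * ρ / 2) * N
        + (η * β ^ 2 * ρ + lam * β * (β * ρ + 1) ^ 2 * η ^ 2) * f x
      ≤ (1 - (α - (β + α / 2) * β * ρ) / 2 * η) * f x := by
    have h3 : η * (1 - β * ρ / 2) * (α * f x) ≤ η * (1 - β * ρ / 2) * N :=
      mul_le_mul_of_nonneg_left hPLx hcoef
    rw [hηeq]
    linarith [h3]
  linarith

def finSnocEquiv (n t : ℕ) : ((Fin t → Fin n) × Fin n) ≃ (Fin (t + 1) → Fin n) where
  toFun := fun p => Fin.snoc p.1 p.2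
  invFun := fun ω => (fun j => ω j.castSucc, ω (Fin.last t))
  left_inv := fun p => by
    obtain ⟨a, b⟩ := p
    simp
  right_inv := fun ω => by
    funext j
    induction j using Fin.lastCases <;> simp


/-- Linear convergence of stochastic SAM under β-smoothness of each `f_i`,
λ-smoothness and α-PL of `f`, and interpolation, for
`ρ ≤ 1/((β/α + 1/2)β)` and step size `η★ = (α − (β + α/2)βρ)/(2λβ(βρ+1)²)`:
`E[f(x_t)] ≤ (1 − ((α − (β + α/2)βρ)/2)η★)ᵗ f(x_0)`. -/
theorem stochastic_sam_linear_convergence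
    {n d : ℕ} (hn : 0 < n) (β lam α ρ : ℝ)
    (hβ : 0 < β) (hlam : 0 < lam) (hα : 0 < α)
    (hρ0 : 0 ≤ ρ) (hρ : ρ ≤ 1 / ((β / α + 1 / 2) * β))
    (fi : Fin n → EuclideanSpace ℝ (Fin d) → ℝ)
    (f : EuclideanSpace ℝ (Fin d) → ℝ)
    (hfdef : ∀ x, f x = (n : ℝ)⁻¹ * ∑ i, fi i x)
    (hdiff : ∀ i, Differentiable ℝ (fi i)) (hfdiff : Differentiable ℝ f)
    (hnonneg : ∀ i x, 0 ≤ fi i x)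
    (hβsmooth : ∀ i x y, ‖gradient (fi i) x - gradient (fi i) y‖ ≤ β * ‖x - y‖)
    (hlamsmooth : ∀ x y, ‖gradient f x - gradient f y‖ ≤ lam * ‖x - y‖)
    (xstar : EuclideanSpace ℝ (Fin d))
    (hPL : ∀ x, α * (f x - f xstar) ≤ ‖gradient f x‖ ^ 2)
    (hinterp : ∀ i, fi i xstar = 0 ∧ gradient (fi i) xstar = 0)
    (x0 : EuclideanSpace ℝ (Fin d)) :
    ∀ t : ℕ,
      ((n : ℝ) ^ t)⁻¹ *
          ∑ ω : Fin t → Fin n,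
            f (samTraj ((α - (β + α / 2) * β * ρ) / (2 * lam * β * (β * ρ + 1) ^ 2)) ρ
                fi x0 t ω)
        ≤ (1 - (α - (β + α / 2) * β * ρ) / 2 *
              ((α - (β + α / 2) * β * ρ) / (2 * lam * β * (β * ρ + 1) ^ 2))) ^ t * f x0 := by
  have hn' : (0:ℝ) < (n : ℝ) := by exact_mod_cast hn
  set c : ℝ := α - (β + α / 2) * β * ρ with hcdef
  set η : ℝ := c / (2 * lam * β * (β * ρ + 1) ^ 2) with hηdef
  set q : ℝ := 1 - c / 2 * η with hqdef
  have hbr : (0:ℝ) ≤ β * ρ := mul_nonneg hβ.le hρ0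
  have hbr1 : (0:ℝ) < β * ρ + 1 := by linarith
  have hden : (0:ℝ) < 2 * lam * β * (β * ρ + 1) ^ 2 := by
    have := pow_pos hbr1 2
    positivity
  -- c ≥ 0
  have hD : (0:ℝ) < (β / α + 1 / 2) * β := by positivity
  have h1 : ρ * ((β / α + 1 / 2) * β) ≤ 1 := by
    rw [← le_div_iff₀ hD]
    simpa using hρ
  have h3 : (β + α / 2) * β * ρ ≤ α := by
    have h4 := mul_le_mul_of_nonneg_right h1 hα.le
    have h5 : ρ * ((β / α + 1 / 2) * β) * α = (β + α / 2) * β * ρ := by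
      field_simp
    rw [h5, one_mul] at h4
    exact h4
  have hc0 : 0 ≤ c := by rw [hcdef]; linarith
  have hβρ2 : β * ρ ≤ 2 := by nlinarith [mul_nonneg (mul_nonneg hβ.le hβ.le) hρ0]
  have hη0 : 0 ≤ η := div_nonneg hc0 hden.le
  have hηeq : lam * β * (β * ρ + 1) ^ 2 * η ^ 2 = η * (c / 2) := by
    rw [hηdef]
    field_simp
  have hcα : c ≤ α := by
    rw [hcdef]
    nlinarith [mul_nonneg (mul_nonneg (by linarith : (0:ℝ) ≤ β + α/2) hβ.le) hρ0]
  -- f is nonnegative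
  have hfnn : ∀ y, 0 ≤ f y := fun y => by
    rw [hfdef]
    exact mul_nonneg (by positivity) (Finset.sum_nonneg fun i _ => hnonneg i y)
  -- f xstar = 0
  have hfstar : f xstar = 0 := by
    rw [hfdef, Finset.sum_eq_zero fun i _ => (hinterp i).1, mul_zero]
  have hPL' : ∀ x, α * f x ≤ ‖gradient f x‖ ^ 2 := fun x => by
    have := hPL x
    rw [hfstar] at this
    simpa using this
  -- gradient of f is β-Lipschitz
  have hβf : ∀ a b, ‖gradient f a - gradient f b‖ ≤ β * ‖a - b‖ := by
    intro a b
    have hfeq : f = fun y => (n : ℝ)⁻¹ * ∑ i, fi i y := funext hfdef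
    have ha : gradient f a = (n : ℝ)⁻¹ • ∑ i, gradient (fi i) a := by
      rw [hfeq]; exact grad_avg _ fi hdiff a
    have hb : gradient f b = (n : ℝ)⁻¹ • ∑ i, gradient (fi i) b := by
      rw [hfeq]; exact grad_avg _ fi hdiff b
    rw [ha, hb, ← smul_sub, ← Finset.sum_sub_distrib]
    rw [norm_smul, Real.norm_eq_abs, abs_of_nonneg (inv_nonneg.mpr hn'.le)]
    calc (n:ℝ)⁻¹ * ‖∑ i, (gradient (fi i) a - gradient (fi i) b)‖
        ≤ (n:ℝ)⁻¹ * ∑ i, ‖gradient (fi i) a - gradient (fi i) b‖ := by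
          apply mul_le_mul_of_nonneg_left (norm_sum_le _ _) (inv_nonneg.mpr hn'.le)
      _ ≤ (n:ℝ)⁻¹ * ∑ i : Fin n, β * ‖a - b‖ := by
          apply mul_le_mul_of_nonneg_left
            (Finset.sum_le_sum fun i _ => hβsmooth i a b) (inv_nonneg.mpr hn'.le)
      _ = β * ‖a - b‖ := by
          rw [Finset.sum_const]
          simp
          field_simp
  -- handle the degenerate case f ≡ 0
  by_cases hz : ∀ y, f y = 0
  · intro t
    simp [hz]
  push_neg at hz
  obtain ⟨y, hy⟩ := hz
  have hfy : 0 < f y := lt_of_le_of_ne (hfnn y) (Ne.symm hy)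
  have hb1 : ‖gradient f y‖ ^ 2 ≤ 2 * lam * f y :=
    self_bound hlam hfdiff hlamsmooth hfnn y
  have hb2 : ‖gradient f y‖ ^ 2 ≤ 2 * β * f y :=
    self_bound hβ hfdiff hβf hfnn y
  have hα2lam : α ≤ 2 * lam := by nlinarith [hPL' y]
  have hα2β : α ≤ 2 * β := by nlinarith [hPL' y]
  have hsq : (1:ℝ) ≤ (β * ρ + 1) ^ 2 := by nlinarith
  clear_value c η q
  have hq0 : 0 ≤ q := by
    rw [hqdef, hηdef, sub_nonneg, div_mul_div_comm,
      div_le_one (by nlinarith [hden] : (0:ℝ) < 2 * (2 * lam * β * (β * ρ + 1) ^ 2))]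
    nlinarith [mul_le_mul hcα hcα hc0 hα.le,
      mul_le_mul hα2lam hα2β hα.le (by linarith : (0:ℝ) ≤ 2 * lam),
      mul_le_mul_of_nonneg_left hsq (by positivity : (0:ℝ) ≤ 4 * lam * β)]
  have hηeq' : lam * β * (β * ρ + 1) ^ 2 * η ^ 2
      = η * ((α - (β + α / 2) * β * ρ) / 2) := by
    rw [← hcdef]
    exact hηeq
  -- induction on t
  intro t
  induction t with
  | zero =>
    have h0 : ∀ ω : Fin 0 → Fin n, samTraj η ρ fi x0 0 ω = x0 := fun _ => rfl
    simp [h0]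
  | succ t ih =>
    have hre : ∑ ω : Fin (t + 1) → Fin n, f (samTraj η ρ fi x0 (t + 1) ω)
        = ∑ ω' : Fin t → Fin n, ∑ i : Fin n,
            f (samTraj η ρ fi x0 (t + 1) (Fin.snoc ω' i)) := by
      rw [← Equiv.sum_comp (finSnocEquiv n t) (fun ω => f (samTraj η ρ fi x0 (t + 1) ω)),
        Fintype.sum_prod_type]
      rfl
    have hsnoc : ∀ (ω' : Fin t → Fin n) (i : Fin n),
        samTraj η ρ fi x0 (t + 1) (Fin.snoc ω' i)
          = samTraj η ρ fi x0 t ω' - η • gradient (fi i)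
              (samTraj η ρ fi x0 t ω' + ρ • gradient (fi i) (samTraj η ρ fi x0 t ω')) := by
      intro ω' i
      have h1 : (fun j : Fin t => (Fin.snoc ω' i : Fin (t + 1) → Fin n) j.castSucc) = ω' := by
        funext j
        simp
      show samTraj η ρ fi x0 (t + 1) (Fin.snoc ω' i) = _
      simp only [samTraj, h1, Fin.snoc_last]
    have key : ∀ ω' : Fin t → Fin n,
        ∑ i : Fin n, f (samTraj η ρ fi x0 (t + 1) (Fin.snoc ω' i))
          ≤ (n : ℝ) * (q * f (samTraj η ρ fi x0 t ω')) := by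
      intro ω'
      have hs := sam_step hn β lam α ρ η hβ hlam hα hρ0 hβρ2 hη0 hηeq' fi f hfdef
        hdiff hfdiff hnonneg hβsmooth hlamsmooth hPL' (samTraj η ρ fi x0 t ω')
      have hq' : (1 - (α - (β + α / 2) * β * ρ) / 2 * η) = q := by
        rw [hqdef, hcdef]
      rw [hq', inv_mul_le_iff₀ hn'] at hs
      calc ∑ i : Fin n, f (samTraj η ρ fi x0 (t + 1) (Fin.snoc ω' i))
          = ∑ i : Fin n, f (samTraj η ρ fi x0 t ω' - η • gradient (fi i)
              (samTraj η ρ fi x0 t ω' + ρ • gradient (fi i) (samTraj η ρ fi x0 t ω'))) := by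
            exact Finset.sum_congr rfl fun i _ => by rw [hsnoc ω' i]
        _ ≤ (n : ℝ) * (q * f (samTraj η ρ fi x0 t ω')) := hs
    calc ((n : ℝ) ^ (t + 1))⁻¹ * ∑ ω : Fin (t + 1) → Fin n, f (samTraj η ρ fi x0 (t + 1) ω)
        = ((n : ℝ) ^ t)⁻¹ * ((n : ℝ)⁻¹ *
            ∑ ω' : Fin t → Fin n, ∑ i : Fin n,
              f (samTraj η ρ fi x0 (t + 1) (Fin.snoc ω' i))) := by
          rw [hre, pow_succ, mul_inv]
          ring
      _ ≤ ((n : ℝ) ^ t)⁻¹ * ((n : ℝ)⁻¹ *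
            ((n : ℝ) * (q * ∑ ω' : Fin t → Fin n, f (samTraj η ρ fi x0 t ω')))) := by
          apply mul_le_mul_of_nonneg_left _ (inv_nonneg.mpr (pow_nonneg hn'.le t))
          apply mul_le_mul_of_nonneg_left _ (inv_nonneg.mpr hn'.le)
          calc ∑ ω' : Fin t → Fin n, ∑ i : Fin n,
              f (samTraj η ρ fi x0 (t + 1) (Fin.snoc ω' i))
              ≤ ∑ ω' : Fin t → Fin n, (n : ℝ) * (q * f (samTraj η ρ fi x0 t ω')) :=
                Finset.sum_le_sum fun ω' _ => key ω'
            _ = (n : ℝ) * (q * ∑ ω' : Fin t → Fin n, f (samTraj η ρ fi x0 t ω')) := by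
                rw [Finset.mul_sum, Finset.mul_sum]
      _ = q * (((n : ℝ) ^ t)⁻¹ * ∑ ω' : Fin t → Fin n, f (samTraj η ρ fi x0 t ω')) := by
          rw [inv_mul_cancel_left₀ hn'.ne']
          ring
      _ ≤ q * (q ^ t * f x0) := mul_le_mul_of_nonneg_left ih hq0
      _ = q ^ (t + 1) * f x0 := by
          rw [pow_succ]
          ring
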